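/- Let γ be a numbering and let A, B, C ⊆ ℕ. Suppose γ is (2, A)-divisible and A ≤_T B. If C ≤_γ B, then C ≤_T B. -/

import Mathlib

open Nat Part

/-- Partial functions on `ℕ` computable relative to an oracle set `A`. -/
inductive RecursiveInSet (A : Set ℕ) : (ℕ →. ℕ) → Prop
  | zero : RecursiveInSet A (pure 0)
  | succ : RecursiveInSet A ↑Nat.succ
  | left : RecursiveInSet A ↑fun n : ℕ => n.unpair.1
  | right : RecursiveInSet A ↑fun n : ℕ => n.unpair.2
  | oracle : RecursiveInSet A ↑fun n : ℕ => A.indicator 1 n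
  | pair {f g} : RecursiveInSet A f → RecursiveInSet A g →
      RecursiveInSet A fun n => Nat.pair <$> f n <*> g n
  | comp {f g} : RecursiveInSet A f → RecursiveInSet A g →
      RecursiveInSet A fun n => g n >>= f
  | prec {f g} : RecursiveInSet A f → RecursiveInSet A g →
      RecursiveInSet A (Nat.unpaired fun a n =>
        n.rec (f a) fun y IH => do let i ← IH; g (Nat.pair a (Nat.pair y i)))
  | rfind {f} : RecursiveInSet A f →
      RecursiveInSet A fun a => Nat.rfind fun n => (fun m => m = 0) <$> f (Nat.pair a n)

/-- A total function `f : ℕ → ℕ` is `A`-computable. -/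
def ComputableInSet (A : Set ℕ) (f : ℕ → ℕ) : Prop :=
  RecursiveInSet A fun n => Part.some (f n)

/-- A total binary function is `A`-computable. -/
def ComputableInSet₂ (A : Set ℕ) (h : ℕ → ℕ → ℕ) : Prop :=
  ComputableInSet A fun n => h n.unpair.1 n.unpair.2

/-- The characteristic function of a set of naturals. -/
noncomputable def chi (A : Set ℕ) : ℕ → ℕ := A.indicator 1

/-- Turing reducibility: `A ≤_T B`. -/
def TuringLE (A B : Set ℕ) : Prop := ComputableInSet B (chi A)

/-- `A` is computable. -/
def SetComputable (A : Set ℕ) : Prop := ComputableInSet ∅ (chi A)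

/-- `X` is computably enumerable in `A`: `X` is the domain of a partial
`A`-computable function. -/
def CEIn (A : Set ℕ) (X : Set ℕ) : Prop :=
  ∃ p : ℕ →. ℕ, RecursiveInSet A p ∧ X = p.Dom

/-- `A ≤_γ B` (`A` is `(γ,B)`-low): every total `A`-computable function has a
`B`-computable `γ`-lift. -/
def GammaLE (γ : ℕ → ℕ → Prop) (A B : Set ℕ) : Prop :=
  ∀ f : ℕ → ℕ, ComputableInSet A f →
    ∃ g : ℕ → ℕ, ComputableInSet B g ∧ ∀ n, γ (f n) (g n)

/-- `A` is `γ`-low: `A ≤_γ ∅`. -/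
def GammaLow (γ : ℕ → ℕ → Prop) (A : Set ℕ) : Prop := GammaLE γ A ∅

/-- `γ` is `(n, A)`-divisible (for finite `n`). -/
def DivisibleFin (γ : ℕ → ℕ → Prop) (n : ℕ) (A : Set ℕ) : Prop :=
  ∃ (x : Fin n → ℕ) (X : Fin n → Set ℕ),
    (∀ i, CEIn A (X i)) ∧
    (∀ i, {m | γ (x i) m} ⊆ X i) ∧
    (∀ i j, i ≠ j → {m | γ (x i) m} ∩ X j = ∅)

/-- `γ` is `(ω, A)`-divisible. -/
def DivisibleOmega (γ : ℕ → ℕ → Prop) (A : Set ℕ) : Prop :=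
  ∃ (x : ℕ → ℕ) (X : ℕ → Set ℕ),
    ComputableInSet A x ∧
    CEIn A {k : ℕ | k.unpair.2 ∈ X k.unpair.1} ∧
    (∀ i, {m | γ (x i) m} ⊆ X i) ∧
    (∀ i j, i ≠ j → {m | γ (x i) m} ∩ X j = ∅)

/-- `γ` is `A`-precomplete: every partial `A`-computable function has a total
`A`-computable totalization modulo `γ`. -/
def PrecompleteIn (γ : ℕ → ℕ → Prop) (A : Set ℕ) : Prop :=
  ∀ ψ : ℕ →. ℕ, RecursiveInSet A ψ →
    ∃ f : ℕ → ℕ, ComputableInSet A f ∧ ∀ n, ∀ y ∈ ψ n, γ y (f n)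

/-- `γ` is a c.e. numbering. -/
def CENumbering (γ : ℕ → ℕ → Prop) : Prop :=
  CEIn ∅ {k : ℕ | γ k.unpair.1 k.unpair.2}

/-- The `e`-th partial computable function. -/
def phi (e : ℕ) : ℕ →. ℕ := (Denumerable.ofNat Nat.Partrec.Code e).eval

/-- The `e`-th computably enumerable set. -/
def Wset (e : ℕ) : Set ℕ := (phi e).Dom

/-- The halting set `∅'`. -/
def halting : Set ℕ := {e : ℕ | (phi e e).Dom}


section Aux

open Encodable Denumerable

theorem RecursiveInSet.of_eq' {A : Set ℕ} {f g : ℕ →. ℕ} (hf : RecursiveInSet A f)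
    (H : ∀ n, f n = g n) : RecursiveInSet A g := (funext H : f = g) ▸ hf

theorem RecursiveInSet.of_partrec {A : Set ℕ} {f : ℕ →. ℕ} (hf : Nat.Partrec f) :
    RecursiveInSet A f := by
  induction hf with
  | zero => exact .zero
  | succ => exact .succ
  | left => exact .left
  | right => exact .right
  | pair _ _ ih1 ih2 => exact .pair ih1 ih2
  | comp _ _ ih1 ih2 => exact .comp ih1 ih2
  | prec _ _ ih1 ih2 => exact .prec ih1 ih2
  | rfind _ ih => exact .rfind ih

theorem ComputableInSet.of_computable {A : Set ℕ} {f : ℕ → ℕ} (hf : Computable f) :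
    ComputableInSet A f := by
  have : Nat.Partrec (f : ℕ →. ℕ) := Partrec.nat_iff.1 hf
  exact (RecursiveInSet.of_partrec this).of_eq' fun n => rfl

theorem indicator_part_eq (A : Set ℕ) (n : ℕ) :
    (↑fun n : ℕ => A.indicator 1 n : ℕ →. ℕ) n = Part.some (chi A n) := by
  by_cases h : n ∈ A
  · simp [Set.indicator_of_mem h, chi, Part.one_def]
  · simp [Set.indicator_of_notMem h, chi]
    rfl

theorem ComputableInSet.chi {A : Set ℕ} : ComputableInSet A (chi A) :=
  (RecursiveInSet.oracle).of_eq' fun n => (indicator_part_eq A n)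

theorem ComputableInSet.comp' {A : Set ℕ} {f g : ℕ → ℕ} (hf : ComputableInSet A f)
    (hg : ComputableInSet A g) : ComputableInSet A fun n => f (g n) := by
  have := RecursiveInSet.comp hf hg
  exact this.of_eq' fun n => by simp [Part.bind_some]

theorem ComputableInSet.pair' {A : Set ℕ} {f g : ℕ → ℕ} (hf : ComputableInSet A f)
    (hg : ComputableInSet A g) : ComputableInSet A fun n => Nat.pair (f n) (g n) := by
  have := RecursiveInSet.pair hf hg
  exact this.of_eq' fun n => by simp [Seq.seq]

theorem RecursiveInSet.mono_oracle {A B : Set ℕ} (hAB : TuringLE A B) {f : ℕ →. ℕ}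
    (hf : RecursiveInSet A f) : RecursiveInSet B f := by
  induction hf with
  | zero => exact .zero
  | succ => exact .succ
  | left => exact .left
  | right => exact .right
  | oracle => exact hAB.of_eq' fun n => (indicator_part_eq _ n).symm
  | pair _ _ ih1 ih2 => exact .pair ih1 ih2
  | comp _ _ ih1 ih2 => exact .comp ih1 ih2
  | prec _ _ ih1 ih2 => exact .prec ih1 ih2
  | rfind _ ih => exact .rfind ih

/-- Oracle prefix of length `s`. -/
noncomputable def oracleList (B : Set ℕ) (s : ℕ) : List ℕ := (List.range s).map (chi B)

theorem oracleList_get? (B : Set ℕ) (s n : ℕ) :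
    (oracleList B s)[n]? = if n < s then Option.some (chi B n) else Option.none := by
  by_cases h : n < s <;>
    simp [oracleList, List.getElem?_map, List.getElem?_range, h,
      List.getElem?_eq_none, not_lt.1]

/-- Coded oracle prefix. -/
noncomputable def oracleCode (B : Set ℕ) (s : ℕ) : ℕ := Encodable.encode (oracleList B s)

theorem ofNat_oracleCode (B : Set ℕ) (s : ℕ) :
    Denumerable.ofNat (List ℕ) (oracleCode B s) = oracleList B s := by
  simp [oracleCode]

theorem ComputableInSet.of_eq {A : Set ℕ} {f g : ℕ → ℕ} (hf : ComputableInSet A f)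
    (H : ∀ n, f n = g n) : ComputableInSet A g := (funext H : f = g) ▸ hf

theorem ComputableInSet.nat_prec {A : Set ℕ} {f g : ℕ → ℕ} (hf : ComputableInSet A f)
    (hg : ComputableInSet A g) :
    ComputableInSet A (Nat.unpaired fun a n =>
      Nat.rec (f a) (fun y IH => g (Nat.pair a (Nat.pair y IH))) n) := by
  have h := RecursiveInSet.prec (f := fun n => Part.some (f n)) (g := fun n => Part.some (g n)) hf hg
  refine h.of_eq' fun m => ?_
  simp only [Nat.unpaired]
  induction m.unpair.2 with
  | zero => rfl
  | succ n ih =>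
    have hred : (Nat.rec (Part.some (f (Nat.unpair m).1))
        (fun y IH => do
          let i ← IH
          Part.some (g (Nat.pair (Nat.unpair m).1 (Nat.pair y i)))) (n + 1) : Part ℕ) =
        (Nat.rec (Part.some (f (Nat.unpair m).1))
          (fun y IH => do
            let i ← IH
            Part.some (g (Nat.pair (Nat.unpair m).1 (Nat.pair y i)))) n : Part ℕ) >>=
          fun i => Part.some (g (Nat.pair (Nat.unpair m).1 (Nat.pair n i))) := rfl
    rw [hred, ih]
    simp

theorem computableIn_oracleCode {B : Set ℕ} : ComputableInSet B (oracleCode B) := by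
  classical
  have hGp : Primrec fun k : ℕ =>
      Encodable.encode (Denumerable.ofNat (List ℕ) k.unpair.1.unpair.2.unpair.2 ++
        [k.unpair.2]) :=
    Primrec.encode.comp (Primrec.list_append.comp
      ((Primrec.ofNat (List ℕ)).comp (Primrec.snd.comp (Primrec.unpair.comp
        (Primrec.snd.comp (Primrec.unpair.comp (Primrec.fst.comp Primrec.unpair))))))
      (Primrec.list_cons.comp (Primrec.snd.comp Primrec.unpair) (Primrec.const [])))
  have hproj : Computable fun m : ℕ => m.unpair.2.unpair.1 :=
    (Primrec.fst.comp (Primrec.unpair.comp (Primrec.snd.comp Primrec.unpair))).to_comp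
  have hstep : ComputableInSet B fun m : ℕ =>
      Encodable.encode (Denumerable.ofNat (List ℕ) m.unpair.2.unpair.2 ++
        [chi B m.unpair.2.unpair.1]) := by
    have hc := ComputableInSet.comp' (ComputableInSet.of_computable hGp.to_comp)
      (ComputableInSet.pair' (ComputableInSet.of_computable Computable.id)
        (ComputableInSet.comp' (ComputableInSet.chi (A := B)) (ComputableInSet.of_computable hproj)))
    exact hc.of_eq fun m => by simp
  have hconst : ComputableInSet B fun _ : ℕ => Encodable.encode ([] : List ℕ) :=
    ComputableInSet.of_computable (Computable.const _)
  have hrec := ComputableInSet.nat_prec hconst hstep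
  have hpz : ComputableInSet B fun s : ℕ => Nat.pair 0 s :=
    ComputableInSet.of_computable (Primrec₂.natPair.to_comp.comp (Computable.const 0) Computable.id)
  have hcomp := ComputableInSet.comp' hrec hpz
  refine hcomp.of_eq fun s => ?_
  simp only [Nat.unpaired, Nat.unpair_pair]
  induction s with
  | zero => simp [oracleCode, oracleList]
  | succ n ih =>
    have hred : (Nat.rec (motive := fun _ => ℕ) (Encodable.encode ([] : List ℕ))
        (fun y IH => Encodable.encode (Denumerable.ofNat (List ℕ) IH ++ [chi B y])) (n + 1)) =
        Encodable.encode (Denumerable.ofNat (List ℕ)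
          (Nat.rec (motive := fun _ => ℕ) (Encodable.encode ([] : List ℕ))
            (fun y IH => Encodable.encode (Denumerable.ofNat (List ℕ) IH ++ [chi B y])) n) ++
          [chi B n]) := rfl
    rw [hred, ih]
    simp [oracleCode, oracleList, List.range_succ]

/-- bounded search used for the rfind case -/
def bsearch (q : ℕ → Option ℕ) (k : ℕ) : Option (Option ℕ) :=
  Nat.rec Option.none (fun y IH => Option.casesOn IH
    (Option.casesOn (q y) (Option.some Option.none)
      fun v => if v = 0 then Option.some (Option.some y) else Option.none)
    fun r => Option.some r) k

theorem bsearch_zero (q : ℕ → Option ℕ) : bsearch q 0 = Option.none := rfl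

theorem bsearch_succ (q : ℕ → Option ℕ) (k : ℕ) :
    bsearch q (k + 1) = Option.casesOn (bsearch q k)
      (Option.casesOn (q k) (Option.some Option.none)
        fun v => if v = 0 then Option.some (Option.some k) else Option.none)
      (fun r => Option.some r) := rfl

theorem bsearch_none_iff {q : ℕ → Option ℕ} {k : ℕ} :
    bsearch q k = Option.none ↔ ∀ j < k, ∃ v, q j = Option.some v ∧ v ≠ 0 := by
  induction k with
  | zero => simp [bsearch_zero]
  | succ k ih =>
    rw [bsearch_succ]
    constructor
    · intro h
      cases hb : bsearch q k with
      | some r => rw [hb] at h; exact absurd h (by simp)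
      | none =>
        rw [hb] at h
        intro j hj
        rcases Nat.lt_succ_iff_lt_or_eq.1 hj with hj' | rfl
        · exact ih.1 hb j hj'
        · cases hq : q j with
          | none => rw [hq] at h; exact absurd h (by simp)
          | some v =>
            rw [hq] at h
            refine ⟨v, rfl, fun hv => ?_⟩
            subst hv; simp at h
    · intro H
      have h' : bsearch q k = Option.none := ih.2 fun j hj => H j (hj.trans (Nat.lt_succ_self k))
      obtain ⟨v, hv, hv0⟩ := H k (Nat.lt_succ_self k)
      rw [h', hv]
      simp [hv0]

theorem bsearch_some_some_iff {q : ℕ → Option ℕ} {k m : ℕ} :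
    bsearch q k = Option.some (Option.some m) ↔
      m < k ∧ q m = Option.some 0 ∧ ∀ j < m, ∃ v, q j = Option.some v ∧ v ≠ 0 := by
  induction k with
  | zero => simp [bsearch_zero]
  | succ k ih =>
    rw [bsearch_succ]
    constructor
    · intro h
      cases hb : bsearch q k with
      | some r =>
        rw [hb] at h
        have : r = Option.some m := by simpa using h
        subst this
        obtain ⟨h1, h2, h3⟩ := ih.1 hb
        exact ⟨h1.trans (Nat.lt_succ_self k), h2, h3⟩
      | none =>
        rw [hb] at h
        cases hq : q k with
        | none => rw [hq] at h; simp at h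
        | some v =>
          rw [hq] at h
          by_cases hv : v = 0
          · subst hv
            simp at h
            subst h
            exact ⟨Nat.lt_succ_self _, hq, bsearch_none_iff.1 hb⟩
          · simp [hv] at h
    · rintro ⟨h1, h2, h3⟩
      rcases Nat.lt_succ_iff_lt_or_eq.1 h1 with h1' | rfl
      · rw [ih.2 ⟨h1', h2, h3⟩]
      · rw [bsearch_none_iff.2 h3, h2]
        simp

theorem bsearch_computable {F : List ℕ → ℕ → Option ℕ} (hF : Computable₂ F) :
    Computable₂ fun (l : List ℕ) (a : ℕ) =>
      Option.join (bsearch (fun m => F l (Nat.pair a m)) l.length) := by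
  have hstep : Computable₂ fun (p : List ℕ × ℕ) (yIH : ℕ × Option (Option ℕ)) =>
      (Option.casesOn yIH.2
        (Option.casesOn (F p.1 (Nat.pair p.2 yIH.1)) (Option.some Option.none)
          fun v => if v = 0 then Option.some (Option.some yIH.1) else Option.none)
        (fun r => Option.some r) : Option (Option ℕ)) := by
    apply Computable.option_casesOn
      (o := fun x : (List ℕ × ℕ) × ℕ × Option (Option ℕ) => x.2.2)
      (Computable.snd.comp Computable.snd)
    · apply Computable.option_casesOn
        (o := fun x : (List ℕ × ℕ) × ℕ × Option (Option ℕ) => F x.1.1 (Nat.pair x.1.2 x.2.1))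
        (hF.comp (Computable.fst.comp Computable.fst)
          (Primrec₂.natPair.to_comp.comp (Computable.snd.comp Computable.fst)
            (Computable.fst.comp Computable.snd)))
        (Computable.const (Option.some Option.none))
      exact (Primrec.ite (Primrec.eq.comp Primrec.snd (Primrec.const 0))
        (Primrec.option_some.comp (Primrec.option_some.comp
          (Primrec.fst.comp (Primrec.snd.comp Primrec.fst))))
        (Primrec.const Option.none)).to_comp.to₂
    · exact (Computable.option_some.comp Computable.snd).to₂
  have hb : Computable fun p : List ℕ × ℕ =>
      bsearch (fun m => F p.1 (Nat.pair p.2 m)) p.1.length := by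
    have := Computable.nat_rec (f := fun p : List ℕ × ℕ => p.1.length)
      (g := fun _ : List ℕ × ℕ => (Option.none : Option (Option ℕ)))
      ((Primrec.list_length.comp Primrec.fst).to_comp) (Computable.const Option.none) hstep
    exact this.of_eq fun p => rfl
  have hjoin : Computable fun p : List ℕ × ℕ =>
      Option.join (bsearch (fun m => F p.1 (Nat.pair p.2 m)) p.1.length) := by
    have := Computable.option_bind hb
      (show Computable₂ fun (_ : List ℕ × ℕ) (b : Option ℕ) => b from Computable.snd)
    exact this.of_eq fun p => by cases bsearch (fun m => F p.1 (Nat.pair p.2 m)) p.1.length <;> rfl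
  exact hjoin.to₂

theorem oracleList_length (B : Set ℕ) (s : ℕ) : (oracleList B s).length = s := by
  simp [oracleList]

theorem exists_forall_lt_stage {P : ℕ → ℕ → Prop}
    (mono : ∀ {s t j : ℕ}, s ≤ t → P s j → P t j) :
    ∀ {x : ℕ}, (∀ j < x, ∃ s, P s j) → ∃ s, ∀ j < x, P s j := by
  intro x
  induction x with
  | zero => exact fun _ => ⟨0, fun j hj => absurd hj (Nat.not_lt_zero j)⟩
  | succ x ih =>
    intro H
    obtain ⟨s1, hs1⟩ := ih fun j hj => H j (hj.trans (Nat.lt_succ_self x))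
    obtain ⟨s2, hs2⟩ := H x (Nat.lt_succ_self x)
    refine ⟨max s1 s2, fun j hj => ?_⟩
    rcases Nat.lt_succ_iff_lt_or_eq.1 hj with hj' | rfl
    · exact mono (le_max_left _ _) (hs1 j hj')
    · exact mono (le_max_right _ _) hs2

set_option maxHeartbeats 1600000 in
theorem exists_approx {B : Set ℕ} {p : ℕ →. ℕ} (hp : RecursiveInSet B p) :
    ∃ F : List ℕ → ℕ → Option ℕ, Computable₂ F ∧
      (∀ {s t : ℕ}, s ≤ t → ∀ {n x : ℕ},
        F (oracleList B s) n = Option.some x → F (oracleList B t) n = Option.some x) ∧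
      ∀ n x, x ∈ p n ↔ ∃ s, F (oracleList B s) n = Option.some x := by
  induction hp with
  | zero =>
    refine ⟨fun _ _ => Option.some 0, (Computable.const _).to₂,
      fun _ _ _ h => h, fun n x => ?_⟩
    simp [Part.pure_eq_some, Part.mem_some_iff, eq_comm, Pure.pure, PFun.pure]
  | succ =>
    refine ⟨fun _ n => Option.some (n + 1),
      (Computable.option_some.comp (Computable.succ.comp Computable.snd)).to₂,
      fun _ _ _ h => h, fun n x => ?_⟩
    simp [PFun.coe_val, Part.mem_some_iff, eq_comm, Nat.succ_eq_add_one]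
  | left =>
    refine ⟨fun _ n => Option.some n.unpair.1,
      (Computable.option_some.comp
        ((Primrec.fst.comp Primrec.unpair).to_comp.comp Computable.snd)).to₂,
      fun _ _ _ h => h, fun n x => ?_⟩
    simp [PFun.coe_val, Part.mem_some_iff, eq_comm]
  | right =>
    refine ⟨fun _ n => Option.some n.unpair.2,
      (Computable.option_some.comp
        ((Primrec.snd.comp Primrec.unpair).to_comp.comp Computable.snd)).to₂,
      fun _ _ _ h => h, fun n x => ?_⟩
    simp [PFun.coe_val, Part.mem_some_iff, eq_comm]
  | oracle =>
    refine ⟨fun l n => l[n]?, Computable.list_getElem?, ?_, fun n x => ?_⟩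
    · intro s t hst n x h
      dsimp only at h ⊢
      rw [oracleList_get?] at h ⊢
      by_cases hn : n < s
      · simp only [if_pos hn] at h
        rw [if_pos (lt_of_lt_of_le hn hst)]
        exact h
      · simp [hn] at h
    · dsimp only
      rw [show (B.indicator 1 n : Part ℕ) = Part.some (chi B n) from indicator_part_eq B n,
        Part.mem_some_iff]
      constructor
      · rintro rfl
        exact ⟨n + 1, by rw [oracleList_get?, if_pos (Nat.lt_succ_self n)]⟩
      · rintro ⟨s, hs⟩
        rw [oracleList_get?] at hs
        by_cases hn : n < s
        · rw [if_pos hn] at hs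
          exact (Option.some.injEq _ _ ▸ hs).symm
        · simp [hn] at hs
  | pair _ _ ihf ihg =>
    obtain ⟨F1, c1, m1, i1⟩ := ihf
    obtain ⟨F2, c2, m2, i2⟩ := ihg
    rename_i f g _ _
    refine ⟨fun l n => (F1 l n).bind fun a => (F2 l n).map fun b => Nat.pair a b, ?_, ?_, ?_⟩
    · have hmap : Computable₂ fun (z : List ℕ × ℕ) (a : ℕ) =>
          (F2 z.1 z.2).map fun b => Nat.pair a b :=
        Computable.option_map (c2.comp (Computable.fst.comp Computable.fst)
            (Computable.snd.comp Computable.fst))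
          (Primrec₂.natPair.to_comp.comp (Computable.snd.comp Computable.fst) Computable.snd)
      exact Computable.option_bind c1 hmap
    · intro s t hst n x h
      dsimp only at h ⊢
      obtain ⟨a, ha, h2⟩ := Option.bind_eq_some_iff.1 h
      obtain ⟨b, hb, rfl⟩ := Option.map_eq_some_iff.1 h2
      rw [Option.bind_eq_some_iff]
      exact ⟨a, m1 hst ha, Option.map_eq_some_iff.2 ⟨b, m2 hst hb, rfl⟩⟩
    · intro n x
      dsimp only
      have hseq : (x ∈ Nat.pair <$> f n <*> g n) ↔
          ∃ a ∈ f n, ∃ b ∈ g n, x = Nat.pair a b := by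
        simp [Seq.seq, Part.bind_eq_bind, Part.mem_bind_iff, Part.mem_map_iff, eq_comm]
      rw [hseq]
      constructor
      · rintro ⟨a, ha, b, hb, rfl⟩
        obtain ⟨s1, hs1⟩ := (i1 n a).1 ha
        obtain ⟨s2, hs2⟩ := (i2 n b).1 hb
        refine ⟨max s1 s2, ?_⟩
        rw [Option.bind_eq_some_iff]
        exact ⟨a, m1 (le_max_left _ _) hs1,
          Option.map_eq_some_iff.2 ⟨b, m2 (le_max_right _ _) hs2, rfl⟩⟩
      · rintro ⟨s, hs⟩
        obtain ⟨a, ha, h2⟩ := Option.bind_eq_some_iff.1 hs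
        obtain ⟨b, hb, rfl⟩ := Option.map_eq_some_iff.1 h2
        exact ⟨a, (i1 n a).2 ⟨s, ha⟩, b, (i2 n b).2 ⟨s, hb⟩, rfl⟩
  | comp _ _ ihf ihg =>
    obtain ⟨F1, c1, m1, i1⟩ := ihf
    obtain ⟨F2, c2, m2, i2⟩ := ihg
    refine ⟨fun l n => (F2 l n).bind (F1 l), ?_, ?_, ?_⟩
    · have hb : Computable₂ fun (z : List ℕ × ℕ) (a : ℕ) => F1 z.1 a :=
        c1.comp (Computable.fst.comp Computable.fst) Computable.snd
      exact Computable.option_bind c2 hb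
    · intro s t hst n x h
      dsimp only at h ⊢
      obtain ⟨a, ha, h2⟩ := Option.bind_eq_some_iff.1 h
      rw [Option.bind_eq_some_iff]
      exact ⟨a, m2 hst ha, m1 hst h2⟩
    · intro n x
      dsimp only
      constructor
      · intro hx
        replace hx := Part.mem_bind_iff.1 hx
        obtain ⟨a, ha, hx⟩ := hx
        obtain ⟨s1, hs1⟩ := (i2 n a).1 ha
        obtain ⟨s2, hs2⟩ := (i1 a x).1 hx
        refine ⟨max s1 s2, ?_⟩
        rw [Option.bind_eq_some_iff]
        exact ⟨a, m2 (le_max_left _ _) hs1, m1 (le_max_right _ _) hs2⟩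
      · rintro ⟨s, hs⟩
        obtain ⟨a, ha, h2⟩ := Option.bind_eq_some_iff.1 hs
        refine Part.mem_bind_iff.2 ?_
        exact ⟨a, (i2 n a).2 ⟨s, ha⟩, (i1 a x).2 ⟨s, h2⟩⟩
  | prec _ _ ihf ihg =>
    obtain ⟨F1, c1, m1, i1⟩ := ihf
    obtain ⟨F2, c2, m2, i2⟩ := ihg
    rename_i f g _ _
    have monoG : ∀ (k a : ℕ) {s t : ℕ}, s ≤ t → ∀ {x : ℕ},
        (Nat.rec (F1 (oracleList B s) a) (fun y IH => IH.bind fun i =>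
          F2 (oracleList B s) (Nat.pair a (Nat.pair y i))) k : Option ℕ) = Option.some x →
        (Nat.rec (F1 (oracleList B t) a) (fun y IH => IH.bind fun i =>
          F2 (oracleList B t) (Nat.pair a (Nat.pair y i))) k : Option ℕ) = Option.some x := by
      intro k a
      induction k with
      | zero => intro s t hst x h; exact m1 hst h
      | succ k ih =>
        intro s t hst x h
        obtain ⟨i, hi, h2⟩ := Option.bind_eq_some_iff.1 h
        exact Option.bind_eq_some_iff.2 ⟨i, ih hst hi, m2 hst h2⟩
    have iffG : ∀ (k a x : ℕ),
        (x ∈ (Nat.rec (f a) (fun y IH => IH.bind fun i => g (Nat.pair a (Nat.pair y i))) k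
          : Part ℕ)) ↔ ∃ s, (Nat.rec (F1 (oracleList B s) a) (fun y IH => IH.bind fun i =>
            F2 (oracleList B s) (Nat.pair a (Nat.pair y i))) k : Option ℕ) = Option.some x := by
      intro k a
      induction k with
      | zero => intro x; exact i1 a x
      | succ k ih =>
        intro x
        constructor
        · intro hx
          rw [Part.mem_bind_iff] at hx
          obtain ⟨i, hi, hx⟩ := hx
          obtain ⟨s1, hs1⟩ := (ih i).1 hi
          obtain ⟨s2, hs2⟩ := (i2 _ x).1 hx
          exact ⟨max s1 s2, Option.bind_eq_some_iff.2
            ⟨i, monoG k a (le_max_left _ _) hs1, m2 (le_max_right _ _) hs2⟩⟩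
        · rintro ⟨s, hs⟩
          obtain ⟨i, hi, h2⟩ := Option.bind_eq_some_iff.1 hs
          rw [Part.mem_bind_iff]
          exact ⟨i, (ih i).2 ⟨s, hi⟩, (i2 _ x).2 ⟨s, h2⟩⟩
    refine ⟨fun l m => Nat.rec (F1 l m.unpair.1) (fun y IH => IH.bind fun i =>
        F2 l (Nat.pair m.unpair.1 (Nat.pair y i))) m.unpair.2, ?_, ?_, ?_⟩
    · have hg2 : Computable₂ fun (z : (List ℕ × ℕ) × ℕ × Option ℕ) (i : ℕ) =>
          F2 z.1.1 (Nat.pair z.1.2.unpair.1 (Nat.pair z.2.1 i)) :=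
        c2.comp (Computable.fst.comp (Computable.fst.comp Computable.fst))
          (Primrec₂.natPair.to_comp.comp
            ((Primrec.fst.comp (Primrec.unpair.comp Primrec.snd)).to_comp.comp
              (Computable.fst.comp Computable.fst))
            (Primrec₂.natPair.to_comp.comp
              (Computable.fst.comp (Computable.snd.comp Computable.fst)) Computable.snd))
      have hh : Computable₂ fun (p : List ℕ × ℕ) (yIH : ℕ × Option ℕ) =>
          yIH.2.bind fun i => F2 p.1 (Nat.pair p.2.unpair.1 (Nat.pair yIH.1 i)) :=
        Computable.option_bind (Computable.snd.comp Computable.snd) hg2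
      have hf' : Computable fun p : List ℕ × ℕ => p.2.unpair.2 :=
        (Primrec.snd.comp (Primrec.unpair.comp Primrec.snd)).to_comp
      have hg' : Computable fun p : List ℕ × ℕ => F1 p.1 p.2.unpair.1 :=
        c1.comp Computable.fst ((Primrec.fst.comp (Primrec.unpair.comp Primrec.snd)).to_comp)
      exact Computable.nat_rec hf' hg' hh
    · intro s t hst n x h
      dsimp only at h ⊢
      exact monoG _ _ hst h
    · intro n x
      dsimp only
      have := iffG n.unpair.2 n.unpair.1 x
      simpa [Nat.unpaired] using this
  | rfind _ ihf =>
    obtain ⟨F1, c1, m1, i1⟩ := ihf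
    rename_i f _
    refine ⟨fun l a => Option.join (bsearch (fun m => F1 l (Nat.pair a m)) l.length),
      bsearch_computable c1, ?_, ?_⟩
    · intro s t hst a x h
      dsimp only at h ⊢
      rw [Option.join_eq_some_iff] at h ⊢
      rw [oracleList_length] at h ⊢
      obtain ⟨h1, h2, h3⟩ := bsearch_some_some_iff.1 h
      refine bsearch_some_some_iff.2 ⟨lt_of_lt_of_le h1 hst, m1 hst h2, fun j hj => ?_⟩
      obtain ⟨v, hv, hv0⟩ := h3 j hj
      exact ⟨v, m1 hst hv, hv0⟩
    · intro a x
      constructor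
      · intro hx
        have hspec := Nat.rfind_spec hx
        have hmin := fun {m} (hm : m < x) => Nat.rfind_min hx hm
        simp only [Part.map_eq_map, Part.mem_map_iff] at hspec
        obtain ⟨v, hv, hv0⟩ := hspec
        have hv0' : v = 0 := by simpa using hv0
        subst hv0'
        obtain ⟨s0, hs0⟩ := (i1 _ 0).1 hv
        have H : ∀ j < x, ∃ s, ∃ w, F1 (oracleList B s) (Nat.pair a j) = Option.some w ∧ w ≠ 0 := by
          intro j hj
          have := hmin hj
          simp only [Part.map_eq_map, Part.mem_map_iff] at this
          obtain ⟨w, hw, hw0⟩ := this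
          have hw0' : w ≠ 0 := by simpa using hw0
          obtain ⟨s, hs⟩ := (i1 _ w).1 hw
          exact ⟨s, w, hs, hw0'⟩
        obtain ⟨s1, hs1⟩ := exists_forall_lt_stage
          (P := fun s j => ∃ w, F1 (oracleList B s) (Nat.pair a j) = Option.some w ∧ w ≠ 0)
          (fun {s t j} hst ⟨w, hw, hw0⟩ => ⟨w, m1 hst hw, hw0⟩) H
        refine ⟨max (max s0 s1) (x + 1), ?_⟩
        dsimp only
        rw [Option.join_eq_some_iff, oracleList_length]
        refine bsearch_some_some_iff.2 ⟨?_, ?_, ?_⟩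
        · exact lt_of_lt_of_le (Nat.lt_succ_self x) (le_max_right _ _)
        · exact m1 (le_trans (le_max_left _ _) (le_max_left _ _)) hs0
        · intro j hj
          obtain ⟨w, hw, hw0⟩ := hs1 j hj
          exact ⟨w, m1 (le_trans (le_max_right _ _) (le_max_left _ _)) hw, hw0⟩
      · rintro ⟨s, hs⟩
        dsimp only at hs
        rw [Option.join_eq_some_iff, oracleList_length] at hs
        obtain ⟨h1, h2, h3⟩ := bsearch_some_some_iff.1 hs
        refine Nat.mem_rfind.2 ?_
        constructor
        · simp only [Part.map_eq_map, Part.mem_map_iff]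
          exact ⟨0, (i1 _ 0).2 ⟨s, h2⟩, by simp⟩
        · intro m hm
          obtain ⟨w, hw, hw0⟩ := h3 m hm
          simp only [Part.map_eq_map, Part.mem_map_iff]
          exact ⟨w, (i1 _ w).2 ⟨s, hw⟩, by simpa using hw0⟩

end Aux

/-- If `γ` is `(2, A)`-divisible, `A ≤_T B` and `C ≤_γ B`,
then `C ≤_T B`. -/
theorem turingLE_of_gammaLE_upper (γ : ℕ → ℕ → Prop) (hγ : Equivalence γ)
    (A B C : Set ℕ) (hdiv : DivisibleFin γ 2 A) (hAB : TuringLE A B)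
    (h : GammaLE γ C B) : TuringLE C B := by
  classical
  obtain ⟨x, X, hce, hsub, hdisj⟩ := hdiv
  -- a C-computable selector function
  have hplain : Computable fun m : ℕ => if m = 0 then x 0 else x 1 :=
    (Primrec.ite (Primrec.eq.comp Primrec.id (Primrec.const 0))
      (Primrec.const (x 0)) (Primrec.const (x 1))).to_comp
  have hfC : ComputableInSet C fun n => if chi C n = 0 then x 0 else x 1 :=
    ComputableInSet.comp' (ComputableInSet.of_computable hplain) (ComputableInSet.chi (A := C))
  obtain ⟨g, hgB, hγg⟩ := h _ hfC
  have hchi1 : ∀ n, n ∈ C → chi C n = 1 := fun n hn => by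
    simp [chi, Set.indicator_of_mem hn]
  have hchi0 : ∀ n, n ∉ C → chi C n = 0 := fun n hn => by
    simp [chi, Set.indicator_of_notMem hn]
  have hγ1 : ∀ n, n ∈ C → γ (x 1) (g n) := by
    intro n hn
    have := hγg n
    rwa [if_neg (by rw [hchi1 n hn]; exact one_ne_zero)] at this
  have hγ0 : ∀ n, n ∉ C → γ (x 0) (g n) := by
    intro n hn
    have := hγg n
    rwa [if_pos (hchi0 n hn)] at this
  obtain ⟨p0, hp0A, hX0⟩ := hce 0
  obtain ⟨p1, hp1A, hX1⟩ := hce 1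
  obtain ⟨F0, c0, m0, i0⟩ := exists_approx (RecursiveInSet.mono_oracle hAB hp0A)
  obtain ⟨F1, c1, m1, i1⟩ := exists_approx (RecursiveInSet.mono_oracle hAB hp1A)
  have hmem1 : ∀ n, n ∈ C → g n ∈ X 1 := fun n hn => hsub 1 (hγ1 n hn)
  have hmem0 : ∀ n, n ∉ C → g n ∈ X 0 := fun n hn => hsub 0 (hγ0 n hn)
  have hnot0 : ∀ n, n ∈ C → g n ∉ X 0 := by
    intro n hn hmem
    exact Set.eq_empty_iff_forall_notMem.1 (hdisj 1 0 (by decide)) (g n) ⟨hγ1 n hn, hmem⟩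
  have hnot1 : ∀ n, n ∉ C → g n ∉ X 1 := by
    intro n hn hmem
    exact Set.eq_empty_iff_forall_notMem.1 (hdisj 0 1 (by decide)) (g n) ⟨hγ0 n hn, hmem⟩
  have hF0none : ∀ n, n ∈ C → ∀ s, F0 (oracleList B s) (g n) = Option.none := by
    intro n hn s
    cases hcase : F0 (oracleList B s) (g n) with
    | none => rfl
    | some v =>
      exact absurd (hX0 ▸ Part.dom_iff_mem.2 ⟨v, (i0 _ v).2 ⟨s, hcase⟩⟩) (hnot0 n hn)
  have hF1none : ∀ n, n ∉ C → ∀ s, F1 (oracleList B s) (g n) = Option.none := by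
    intro n hn s
    cases hcase : F1 (oracleList B s) (g n) with
    | none => rfl
    | some v =>
      exact absurd (hX1 ▸ Part.dom_iff_mem.2 ⟨v, (i1 _ v).2 ⟨s, hcase⟩⟩) (hnot1 n hn)
  -- computable pieces
  have hk1 : Computable fun k : ℕ => k.unpair.1 :=
    (Primrec.fst.comp Primrec.unpair).to_comp
  have hk2 : Computable fun k : ℕ => k.unpair.2 :=
    (Primrec.snd.comp Primrec.unpair).to_comp
  have hofn : Computable fun k : ℕ => Denumerable.ofNat (List ℕ) k.unpair.1 :=
    ((Primrec.ofNat (List ℕ)).comp (Primrec.fst.comp Primrec.unpair)).to_comp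
  have hb1 : Computable fun k : ℕ =>
      (F1 (Denumerable.ofNat (List ℕ) k.unpair.1) k.unpair.2).isSome :=
    Primrec.option_isSome.to_comp.comp (c1.comp hofn hk2)
  have hb0 : Computable fun k : ℕ =>
      (F0 (Denumerable.ofNat (List ℕ) k.unpair.1) k.unpair.2).isSome :=
    Primrec.option_isSome.to_comp.comp (c0.comp hofn hk2)
  have hQ : Computable fun k : ℕ =>
      cond ((F1 (Denumerable.ofNat (List ℕ) k.unpair.1) k.unpair.2).isSome) 0
        (cond ((F0 (Denumerable.ofNat (List ℕ) k.unpair.1) k.unpair.2).isSome) 0 1) :=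
    Computable.cond hb1 (Computable.const 0)
      (Computable.cond hb0 (Computable.const 0) (Computable.const 1))
  have hU : Computable fun k : ℕ =>
      cond ((F1 (Denumerable.ofNat (List ℕ) k.unpair.1) k.unpair.2).isSome) 1 0 :=
    Computable.cond hb1 (Computable.const 1) (Computable.const 0)
  have hinner : ComputableInSet B fun m : ℕ =>
      Nat.pair (oracleCode B m.unpair.2) (g m.unpair.1) :=
    ComputableInSet.pair'
      (ComputableInSet.comp' computableIn_oracleCode (ComputableInSet.of_computable hk2))
      (ComputableInSet.comp' hgB (ComputableInSet.of_computable hk1))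
  have hqB : ComputableInSet B fun m : ℕ =>
      cond ((F1 (oracleList B m.unpair.2) (g m.unpair.1)).isSome) 0
        (cond ((F0 (oracleList B m.unpair.2) (g m.unpair.1)).isSome) 0 1) :=
    (ComputableInSet.comp' (ComputableInSet.of_computable hQ) hinner).of_eq fun m => by
      simp [ofNat_oracleCode, Nat.unpair_pair]
  have huB : ComputableInSet B fun m : ℕ =>
      cond ((F1 (oracleList B m.unpair.2) (g m.unpair.1)).isSome) 1 0 :=
    (ComputableInSet.comp' (ComputableInSet.of_computable hU) hinner).of_eq fun m => by
      simp [ofNat_oracleCode, Nat.unpair_pair]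
  have hid : ComputableInSet B fun n : ℕ => n := ComputableInSet.of_computable Computable.id
  have hfull := RecursiveInSet.comp huB (RecursiveInSet.pair hid (RecursiveInSet.rfind hqB))
  show ComputableInSet B (chi C)
  refine hfull.of_eq' fun n => ?_
  dsimp only
  by_cases hn : n ∈ C
  · -- n ∈ C : F0 never answers, F1 eventually does
    have hnone0 := hF0none n hn
    have hdom1 : (p1 (g n)).Dom := by have := hmem1 n hn; rwa [hX1] at this
    obtain ⟨v, hv⟩ := Part.dom_iff_mem.1 hdom1
    obtain ⟨s0, hs0⟩ := (i1 _ v).1 hv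
    have hq0 : (fun m : ℕ =>
        cond ((F1 (oracleList B m.unpair.2) (g m.unpair.1)).isSome) 0
          (cond ((F0 (oracleList B m.unpair.2) (g m.unpair.1)).isSome) 0 1))
        (Nat.pair n s0) = 0 := by
      simp [Nat.unpair_pair, hs0]
    have hdomR : (Nat.rfind fun k => (fun m => m = 0) <$>
        (fun m : ℕ => Part.some (cond ((F1 (oracleList B m.unpair.2) (g m.unpair.1)).isSome) 0
          (cond ((F0 (oracleList B m.unpair.2) (g m.unpair.1)).isSome) 0 1)))
        (Nat.pair n k)).Dom := by
      apply Nat.rfind_dom.2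
      refine ⟨s0, by simp [Nat.unpair_pair, hs0], fun {m} _ => by simp⟩
    obtain ⟨k0, hk0⟩ := Part.dom_iff_mem.1 hdomR
    have hspec := Nat.rfind_spec hk0
    simp only [Part.map_eq_map, Part.mem_map_iff, Part.mem_some_iff] at hspec
    obtain ⟨w, hw, hw0⟩ := hspec
    subst hw
    have hqk0 : (cond ((F1 (oracleList B k0) (g n)).isSome) 0
        (cond ((F0 (oracleList B k0) (g n)).isSome) 0 1) : ℕ) = 0 := by
      have := of_decide_eq_true hw0
      simpa [Nat.unpair_pair] using this
    have hb1true : (F1 (oracleList B k0) (g n)).isSome = true := by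
      by_contra hb
      rw [Bool.not_eq_true] at hb
      rw [hb, hnone0 k0] at hqk0
      simp at hqk0
    have hsome : (Nat.rfind fun k => (fun m => m = 0) <$>
        (fun m : ℕ => Part.some (cond ((F1 (oracleList B m.unpair.2) (g m.unpair.1)).isSome) 0
          (cond ((F0 (oracleList B m.unpair.2) (g m.unpair.1)).isSome) 0 1)))
        (Nat.pair n k)) = Part.some k0 := Part.eq_some_iff.2 hk0
    rw [hsome]
    simp [Seq.seq, Nat.unpair_pair, hb1true, hchi1 n hn]
  · -- n ∉ C : F1 never answers, F0 eventually does
    have hnone1 := hF1none n hn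
    have hdom0 : (p0 (g n)).Dom := by have := hmem0 n hn; rwa [hX0] at this
    obtain ⟨v, hv⟩ := Part.dom_iff_mem.1 hdom0
    obtain ⟨s0, hs0⟩ := (i0 _ v).1 hv
    have hdomR : (Nat.rfind fun k => (fun m => m = 0) <$>
        (fun m : ℕ => Part.some (cond ((F1 (oracleList B m.unpair.2) (g m.unpair.1)).isSome) 0
          (cond ((F0 (oracleList B m.unpair.2) (g m.unpair.1)).isSome) 0 1)))
        (Nat.pair n k)).Dom := by
      apply Nat.rfind_dom.2
      refine ⟨s0, by simp [Nat.unpair_pair, hs0, hnone1 s0], fun {m} _ => by simp⟩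
    obtain ⟨k0, hk0⟩ := Part.dom_iff_mem.1 hdomR
    have hsome : (Nat.rfind fun k => (fun m => m = 0) <$>
        (fun m : ℕ => Part.some (cond ((F1 (oracleList B m.unpair.2) (g m.unpair.1)).isSome) 0
          (cond ((F0 (oracleList B m.unpair.2) (g m.unpair.1)).isSome) 0 1)))
        (Nat.pair n k)) = Part.some k0 := Part.eq_some_iff.2 hk0
    rw [hsome]
    simp [Seq.seq, Nat.unpair_pair, hnone1 k0, hchi0 n hn]
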